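/- Let Σ = {a,ā,b,b̄,c,c̄}, k ≥ 1, m ≥ 1, and L = c·{ā,b̄}*·a^k·ā^k. Then the iterated m-bounded hairpin completion satisfies H_k*(L,m,m) = L ∪ H_k(L,m,m); i.e., the iteration stabilizes after one step. -/

import Mathlib

open Computability

/-- Reverse-complement of a word under the involution `bar`. -/
def wbar {S : Type} (bar : S → S) (w : List S) : List S := (w.map bar).reverse

/-- The set of `α`-prefixes of `w` of length at most `ℓ`. -/
def Pa {S : Type} (α w : List S) (ℓ : ℕ) : Language S :=
  {v | v ++ α <+: w ∧ v.length ≤ ℓ}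

/-- `α Σ* ᾱ` : words with prefix `α` and suffix `ᾱ`. -/
def Dom {S : Type} (bar : S → S) (α : List S) : Language S :=
  {z | ∃ β, z = α ++ β ++ wbar bar α}

/-- One-step parameterized hairpin completion with binding word `α`,
left bound `ℓ`, right bound `r`. -/
def HaP {S : Type} (bar : S → S) (α : List S) (ℓ r : ℕ) (L : Language S) : Language S :=
  {z | ∃ γ β, γ.length ≤ ℓ ∧ z = γ ++ α ++ β ++ wbar bar α ++ wbar bar γ ∧
      α ++ β ++ wbar bar α ++ wbar bar γ ∈ L} ⊔
  {z | ∃ γ β, γ.length ≤ r ∧ z = γ ++ α ++ β ++ wbar bar α ++ wbar bar γ ∧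
      γ ++ α ++ β ++ wbar bar α ∈ L}

/-- One-step parameterized hairpin completion `H_k(L,ℓ,r)`. -/
def HkP {S : Type} (bar : S → S) (k ℓ r : ℕ) (L : Language S) : Language S :=
  {z | ∃ α : List S, α.length = k ∧ z ∈ HaP bar α ℓ r L}

def HaIter {S : Type} (bar : S → S) (α : List S) (ℓ r : ℕ) (L : Language S) : ℕ → Language S
  | 0 => L
  | n + 1 => HaP bar α ℓ r (HaIter bar α ℓ r L n)

/-- Iterated parameterized hairpin completion `H_α*(L,ℓ,r)`. -/
def HaStar {S : Type} (bar : S → S) (α : List S) (ℓ r : ℕ) (L : Language S) : Language S :=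
  {z | ∃ n, z ∈ HaIter bar α ℓ r L n}

def HkIter {S : Type} (bar : S → S) (k ℓ r : ℕ) (L : Language S) : ℕ → Language S
  | 0 => L
  | n + 1 => HkP bar k ℓ r (HkIter bar k ℓ r L n)

/-- Iterated parameterized hairpin completion `H_k*(L,ℓ,r)`. -/
def HkStar {S : Type} (bar : S → S) (k ℓ r : ℕ) (L : Language S) : Language S :=
  {z | ∃ n, z ∈ HkIter bar k ℓ r L n}

/-- Unbounded two-sided hairpin completion `H_k(L)`. -/
def HU {S : Type} (bar : S → S) (k : ℕ) (L : Language S) : Language S :=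
  {z | ∃ γ α β, α.length = k ∧ z = γ ++ α ++ β ++ wbar bar α ++ wbar bar γ ∧
      (α ++ β ++ wbar bar α ++ wbar bar γ ∈ L ∨ γ ++ α ++ β ++ wbar bar α ∈ L)}

/-- Unbounded right-sided hairpin completion `RH_k(L)`. -/
def RHU {S : Type} (bar : S → S) (k : ℕ) (L : Language S) : Language S :=
  {z | ∃ γ α β, α.length = k ∧ z = γ ++ α ++ β ++ wbar bar α ++ wbar bar γ ∧
      γ ++ α ++ β ++ wbar bar α ∈ L}

def HUIter {S : Type} (bar : S → S) (k : ℕ) (L : Language S) : ℕ → Language S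
  | 0 => L
  | n + 1 => HU bar k (HUIter bar k L n)

/-- Iterated unbounded two-sided hairpin completion `H_k*(L)`. -/
def HUStar {S : Type} (bar : S → S) (k : ℕ) (L : Language S) : Language S :=
  {z | ∃ n, z ∈ HUIter bar k L n}

def RHUIter {S : Type} (bar : S → S) (k : ℕ) (L : Language S) : ℕ → Language S
  | 0 => L
  | n + 1 => RHU bar k (RHUIter bar k L n)

/-- Iterated unbounded right-sided hairpin completion `RH_k*(L)`. -/
def RHUStar {S : Type} (bar : S → S) (k : ℕ) (L : Language S) : Language S :=
  {z | ∃ n, z ∈ RHUIter bar k L n}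

/-- Image of a language under reverse-complement. -/
def barSet {S : Type} (bar : S → S) (A : Language S) : Language S := wbar bar '' A

/-- The alphabet `Σ = {a, ā, b, b̄, c, c̄}`. -/
inductive HpAb : Type
  | a | abar | b | bbar | c | cbar
deriving DecidableEq

/-- The involution pairing `a ↔ ā`, `b ↔ b̄`, `c ↔ c̄`. -/
def HpAb.inv : HpAb → HpAb
  | .a => .abar
  | .abar => .a
  | .b => .bbar
  | .bbar => .b
  | .c => .cbar
  | .cbar => .c

/-- The language `L = c · {ā,b̄}* · a^k · ā^k`. -/
def LHp (k : ℕ) : Language HpAb :=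
  {z | ∃ v : List HpAb, (∀ x ∈ v, x = HpAb.abar ∨ x = HpAb.bbar) ∧
    z = HpAb.c :: (v ++ List.replicate k HpAb.a ++ List.replicate k HpAb.abar)}

/-- `u^n`: the `n`-fold concatenation of the word `u`. -/
def wpow {S : Type} (u : List S) (n : ℕ) : List S := (List.replicate n u).flatten


/-! ### Auxiliary definitions and lemmas -/

lemma hp_inv_inv (x : HpAb) : x.inv.inv = x := by cases x <;> rfl

lemma wbar_append' (u v : List HpAb) :
    wbar HpAb.inv (u ++ v) = wbar HpAb.inv v ++ wbar HpAb.inv u := by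
  simp [wbar]

lemma wbar_cons' (x : HpAb) (u : List HpAb) :
    wbar HpAb.inv (x :: u) = wbar HpAb.inv u ++ [x.inv] := by
  simp [wbar]

lemma wbar_len (u : List HpAb) : (wbar HpAb.inv u).length = u.length := by
  simp [wbar]

lemma wbar_wbar (u : List HpAb) : wbar HpAb.inv (wbar HpAb.inv u) = u := by
  induction u with
  | nil => rfl
  | cons x xs ih =>
      rw [wbar_cons', wbar_append', ih]
      simp [wbar, hp_inv_inv]

lemma wbar_replicate (k : ℕ) (x : HpAb) :
    wbar HpAb.inv (List.replicate k x) = List.replicate k x.inv := by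
  simp [wbar]

lemma mem_wbar_iff {y : HpAb} {u : List HpAb} :
    y ∈ wbar HpAb.inv u ↔ ∃ x ∈ u, y = x.inv := by
  simp [wbar, eq_comm]

lemma wbar_eq_nil {u : List HpAb} (h : wbar HpAb.inv u = []) : u = [] := by
  have := congrArg List.length h
  simpa [wbar_len] using this

/-- Explicit description of the one-step bounded hairpin completion of `LHp k`. -/
def H0 (k m : ℕ) : Language HpAb :=
  {z | ∃ v : List HpAb, (∀ x ∈ v, x = HpAb.abar ∨ x = HpAb.bbar) ∧ v.length + 1 ≤ m ∧
    z = HpAb.c :: (v ++ List.replicate k HpAb.a ++ List.replicate k HpAb.abar) ++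
        wbar HpAb.inv (HpAb.c :: v)}

lemma LHp_no_cbar {k : ℕ} {w : List HpAb} (hw : w ∈ LHp k) : HpAb.cbar ∉ w := by
  obtain ⟨v, hv, rfl⟩ := hw
  intro h
  simp only [List.mem_cons, List.mem_append, List.mem_replicate] at h
  rcases h with h | (h | h) | h
  · cases h
  · rcases hv _ h with h' | h' <;> cases h'
  · cases h.2
  · cases h.2

lemma H0_cons {k m : ℕ} {w : List HpAb} (hw : w ∈ H0 k m) :
    ∃ t, w = HpAb.c :: t ∧ HpAb.c ∉ t := by
  obtain ⟨v, hv, -, rfl⟩ := hw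
  refine ⟨(v ++ List.replicate k HpAb.a ++ List.replicate k HpAb.abar) ++
      wbar HpAb.inv (HpAb.c :: v), by simp, ?_⟩
  intro h
  simp only [List.mem_append, List.mem_replicate, wbar_cons', List.mem_singleton,
    mem_wbar_iff] at h
  rcases h with ((h | h) | h) | (⟨x, hx, h⟩ | h)
  · rcases hv _ h with h' | h' <;> cases h'
  · cases h.2
  · cases h.2
  · rcases hv _ hx with h' | h' <;> subst h' <;> cases h
  · cases h

lemma H0_snoc {k m : ℕ} {w : List HpAb} (hw : w ∈ H0 k m) :
    ∃ s, w = s ++ [HpAb.cbar] ∧ HpAb.cbar ∉ s := by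
  obtain ⟨v, hv, -, rfl⟩ := hw
  refine ⟨HpAb.c :: (v ++ List.replicate k HpAb.a ++ List.replicate k HpAb.abar) ++
      wbar HpAb.inv v, by simp [wbar_cons', HpAb.inv], ?_⟩
  intro h
  simp only [List.mem_append, List.mem_cons, List.mem_replicate, mem_wbar_iff] at h
  rcases h with (h | (h | h) | h) | ⟨x, hx, h⟩
  · cases h
  · rcases hv _ h with h' | h' <;> cases h'
  · cases h.2
  · cases h.2
  · rcases hv _ hx with h' | h' <;> subst h' <;> cases h

lemma HkP_mono {S : Type} {bar : S → S} {k ℓ r : ℕ} {A B : Language S} (h : A ≤ B) :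
    HkP bar k ℓ r A ≤ HkP bar k ℓ r B := by
  rintro z ⟨α, hα, hz⟩
  rcases hz with ⟨γ, β, h1, h2, h3⟩ | ⟨γ, β, h1, h2, h3⟩
  · exact ⟨α, hα, Or.inl ⟨γ, β, h1, h2, h h3⟩⟩
  · exact ⟨α, hα, Or.inr ⟨γ, β, h1, h2, h h3⟩⟩

lemma HkP_union {S : Type} (bar : S → S) (k ℓ r : ℕ) (A B : Language S) :
    HkP bar k ℓ r (A ⊔ B) ≤ HkP bar k ℓ r A ⊔ HkP bar k ℓ r B := by
  rintro z ⟨α, hα, hz⟩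
  rcases hz with ⟨γ, β, h1, h2, h3⟩ | ⟨γ, β, h1, h2, h3⟩
  · rcases h3 with h3 | h3
    · exact Or.inl ⟨α, hα, Or.inl ⟨γ, β, h1, h2, h3⟩⟩
    · exact Or.inr ⟨α, hα, Or.inl ⟨γ, β, h1, h2, h3⟩⟩
  · rcases h3 with h3 | h3
    · exact Or.inl ⟨α, hα, Or.inr ⟨γ, β, h1, h2, h3⟩⟩
    · exact Or.inr ⟨α, hα, Or.inr ⟨γ, β, h1, h2, h3⟩⟩

lemma HkP_LHp_sub (k m : ℕ) (hk : 1 ≤ k) :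
    HkP HpAb.inv k m m (LHp k) ≤ H0 k m := by
  obtain ⟨k', rfl⟩ : ∃ k', k = k' + 1 := ⟨k - 1, by omega⟩
  set k := k' + 1 with hkdef
  rintro z ⟨α, hα, hz⟩
  rcases hz with ⟨γ, β, hγ, hzeq, hw⟩ | ⟨γ, β, hγ, hzeq, hw⟩
  · -- left rule is impossible: `ᾱ` would put a `c̄` inside a word of `LHp`
    exfalso
    have hαne : α ≠ [] := by intro h; rw [h] at hα; simp at hα
    obtain ⟨a0, α', rfl⟩ := List.exists_cons_of_ne_nil hαne
    obtain ⟨v, hv, hweq⟩ := hw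
    have ha0 : a0 = HpAb.c := by
      have := congrArg (List.head? ·) hweq
      simpa using this
    have hc : HpAb.cbar ∈ (a0 :: α') ++ β ++ wbar HpAb.inv (a0 :: α') ++ wbar HpAb.inv γ := by
      have : HpAb.cbar ∈ wbar HpAb.inv (a0 :: α') := by
        rw [mem_wbar_iff]
        exact ⟨HpAb.c, by simp [ha0], rfl⟩
      simp only [List.mem_append]
      exact Or.inl (Or.inr this)
    exact LHp_no_cbar ⟨v, hv, hweq⟩ hc
  · -- right rule: forces `α = aᵏ`, `β = []`, `γ = c :: v`
    obtain ⟨v, hv, hweq⟩ := hw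
    have hna : HpAb.a ∉ v := by
      intro h; rcases hv _ h with h' | h' <;> cases h'
    have h1 : (γ ++ α ++ β) ++ wbar HpAb.inv α =
        (HpAb.c :: (v ++ List.replicate k HpAb.a)) ++ List.replicate k HpAb.abar := by
      simpa [List.append_assoc] using hweq
    have hlen : (wbar HpAb.inv α).length = (List.replicate k HpAb.abar).length := by
      simp [wbar_len, hα]
    obtain ⟨h2, h3⟩ := List.append_inj' h1 hlen
    have hαa : α = List.replicate k HpAb.a := by
      have := congrArg (wbar HpAb.inv) h3
      rw [wbar_wbar, wbar_replicate] at this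
      exact this
    subst hαa
    -- show β = []
    have hcount : γ.count HpAb.a + (k + β.count HpAb.a) = k := by
      have := congrArg (List.count HpAb.a) h2
      simpa [List.count_append, List.count_replicate, List.count_cons,
        List.count_eq_zero.mpr hna] using this
    have hβa : HpAb.a ∉ β := by
      rw [← List.count_eq_zero]; omega
    have hβ : β = [] := by
      rcases List.eq_nil_or_concat β with h | ⟨bs, x, rfl⟩
      · exact h
      · exfalso
        have h2' : (γ ++ List.replicate k HpAb.a ++ bs) ++ [x] =
            (HpAb.c :: (v ++ List.replicate k' HpAb.a)) ++ [HpAb.a] := by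
          simpa [hkdef, List.replicate_succ', List.append_assoc] using h2
        obtain ⟨-, hx⟩ := List.append_inj' h2' rfl
        simp only [List.cons.injEq] at hx
        exact hβa (by simp [hx.1])
    subst hβ
    have h2' : γ ++ List.replicate k HpAb.a =
        (HpAb.c :: v) ++ List.replicate k HpAb.a := by
      simpa [List.append_assoc] using h2
    have hγv : γ = HpAb.c :: v := (List.append_inj' h2' rfl).1
    subst hγv
    refine ⟨v, hv, by simpa using hγ, ?_⟩
    rw [hzeq, h3]
    simp [List.append_assoc]

lemma H0_sub_HkP (k m : ℕ) : H0 k m ≤ HkP HpAb.inv k m m (LHp k) := by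
  rintro z ⟨v, hv, hlen, rfl⟩
  refine ⟨List.replicate k HpAb.a, by simp, Or.inr ⟨HpAb.c :: v, [], by simpa using hlen,
    ?_, ⟨v, hv, ?_⟩⟩⟩
  · rw [wbar_replicate]
    simp [List.append_assoc, HpAb.inv]
  · rw [wbar_replicate]
    simp [List.append_assoc, HpAb.inv]

lemma HkP_H0_sub (k m : ℕ) (hk : 1 ≤ k) :
    HkP HpAb.inv k m m (H0 k m) ≤ H0 k m := by
  rintro z ⟨α, hα, hz⟩
  have hαne : α ≠ [] := by intro h; rw [h] at hα; simp at hα; omega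
  rcases hz with ⟨γ, β, hγ, hzeq, hw⟩ | ⟨γ, β, hγ, hzeq, hw⟩
  · -- left rule: forces γ = []
    obtain ⟨s, hs, hcs⟩ := H0_snoc hw
    obtain ⟨t, ht, -⟩ := H0_cons hw
    obtain ⟨a0, α', rfl⟩ := List.exists_cons_of_ne_nil hαne
    have ha0 : a0 = HpAb.c := by
      have := congrArg (List.head? ·) ht
      simpa using this
    have hcbar : HpAb.cbar ∈ wbar HpAb.inv (a0 :: α') := by
      rw [mem_wbar_iff]; exact ⟨HpAb.c, by simp [ha0], rfl⟩
    have hγnil : γ = [] := by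
      rcases List.eq_nil_or_concat (wbar HpAb.inv γ) with h | ⟨gs, x, h⟩
      · exact wbar_eq_nil h
      · exfalso
        have heq : ((a0 :: α') ++ β ++ wbar HpAb.inv (a0 :: α') ++ gs) ++ [x] =
            s ++ [HpAb.cbar] := by
          rw [← hs, h]; simp [List.append_assoc]
        obtain ⟨hseq, -⟩ := List.append_inj' heq rfl
        exact hcs (by rw [← hseq]; simp only [List.mem_append]; exact Or.inl (Or.inr hcbar))
    subst hγnil
    rw [hzeq]
    have hw2 := hw; simp [wbar] at hw2 ⊢; exact hw2
  · -- right rule: forces γ = []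
    obtain ⟨t, ht, hct⟩ := H0_cons hw
    obtain ⟨s, hs, -⟩ := H0_snoc hw
    have hαbne : wbar HpAb.inv α ≠ [] := by
      intro h; have := wbar_eq_nil h; rw [this] at hα; simp at hα; omega
    obtain ⟨as, x, hx⟩ := (List.eq_nil_or_concat (wbar HpAb.inv α)).resolve_left hαbne
    have heq : (γ ++ α ++ β ++ as) ++ [x] = s ++ [HpAb.cbar] := by
      rw [← hs, hx]; simp [List.append_assoc]
    obtain ⟨-, hxc⟩ := List.append_inj' heq rfl
    simp only [List.cons.injEq] at hxc
    have hcα : HpAb.c ∈ α := by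
      have h5 := congrArg (wbar HpAb.inv) hx
      rw [wbar_wbar, List.concat_eq_append, wbar_append'] at h5
      rw [h5, hxc.1]
      simp [wbar, HpAb.inv]
    have hγnil : γ = [] := by
      rcases γ with - | ⟨g0, γ'⟩
      · rfl
      · exfalso
        have htt : g0 :: (γ' ++ α ++ β ++ wbar HpAb.inv α) = HpAb.c :: t := by
          rw [← ht]; simp [List.append_assoc]
        simp only [List.cons.injEq] at htt
        refine hct ?_
        rw [← htt.2]
        simp only [List.mem_append]
        exact Or.inl (Or.inl (Or.inr hcα))
    subst hγnil
    rw [hzeq]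
    have hw2 := hw; simp [wbar] at hw2 ⊢; exact hw2

/-- The iterated `m`-bounded hairpin completion of `L = c·{ā,b̄}*·a^k·ā^k`
stabilizes after one step: `H_k*(L,m,m) = L ∪ H_k(L,m,m)`. -/
theorem HkStar_LHp_eq (k m : ℕ) (hk : 1 ≤ k) (hm : 1 ≤ m) :
    HkStar HpAb.inv k m m (LHp k) = LHp k ⊔ HkP HpAb.inv k m m (LHp k) := by
  have hchar : HkP HpAb.inv k m m (LHp k) = H0 k m :=
    le_antisymm (HkP_LHp_sub k m hk) (H0_sub_HkP k m)
  ext z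
  constructor
  · rintro ⟨n, hn⟩
    rw [hchar]
    induction n generalizing z with
    | zero => exact Or.inl hn
    | succ n ih =>
      have h1 : z ∈ HkP HpAb.inv k m m (LHp k ⊔ H0 k m) :=
        HkP_mono (fun y hy => ih y hy) hn
      rcases HkP_union _ _ _ _ _ _ h1 with h | h
      · exact Or.inr (HkP_LHp_sub k m hk h)
      · exact Or.inr (HkP_H0_sub k m hk h)
  · rintro (hz | hz)
    · exact ⟨0, hz⟩
    · exact ⟨1, hz⟩
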